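/- Let λ ∈ ℂ, let B = (b₂, b₁)ᵀ be a 2×1 complex matrix with bottom entry b₁ ≠ 0, and let C = (c₁, c₂) be a 1×2 complex matrix with c₁ ≠ 0. Then the size-(1,2,1) system (J₂(λ), B, C) is equivalent to the canonical form (J₂(λ), (0,1)ᵀ, (1,μ)) for some μ ∈ ℂ. -/

import Mathlib

open Matrix

/-- Two linear dynamical systems `(A,B,C)` and `(A',B',C')` of size `(m,n,l)` are
equivalent if there are invertible matrices `X, Y, Z` with
`A' = Y A Y⁻¹`, `B' = Y B X⁻¹`, `C' = Z C Y⁻¹`. -/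
def SysEquiv {m n l : ℕ}
    (A : Matrix (Fin n) (Fin n) ℂ) (B : Matrix (Fin n) (Fin m) ℂ) (C : Matrix (Fin l) (Fin n) ℂ)
    (A' : Matrix (Fin n) (Fin n) ℂ) (B' : Matrix (Fin n) (Fin m) ℂ) (C' : Matrix (Fin l) (Fin n) ℂ) :
    Prop :=
  ∃ (X : Matrix (Fin m) (Fin m) ℂ) (Y : Matrix (Fin n) (Fin n) ℂ) (Z : Matrix (Fin l) (Fin l) ℂ),
    IsUnit X ∧ IsUnit Y ∧ IsUnit Z ∧
      A' = Y * A * Y⁻¹ ∧ B' = Y * B * X⁻¹ ∧ C' = Z * C * Y⁻¹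

/-- A system of size `(m,n,l)` is decomposable if it is equivalent to a direct sum
(block-diagonal) of two systems, each of nonzero total size. -/
def Decomposable {m n l : ℕ}
    (A : Matrix (Fin n) (Fin n) ℂ) (B : Matrix (Fin n) (Fin m) ℂ)
    (C : Matrix (Fin l) (Fin n) ℂ) : Prop :=
  ∃ (m₁ m₂ n₁ n₂ l₁ l₂ : ℕ) (hm : m₁ + m₂ = m) (hn : n₁ + n₂ = n) (hl : l₁ + l₂ = l)
    (A₁ : Matrix (Fin n₁) (Fin n₁) ℂ) (B₁ : Matrix (Fin n₁) (Fin m₁) ℂ)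
    (C₁ : Matrix (Fin l₁) (Fin n₁) ℂ)
    (A₂ : Matrix (Fin n₂) (Fin n₂) ℂ) (B₂ : Matrix (Fin n₂) (Fin m₂) ℂ)
    (C₂ : Matrix (Fin l₂) (Fin n₂) ℂ),
    0 < m₁ + n₁ + l₁ ∧ 0 < m₂ + n₂ + l₂ ∧
      SysEquiv A B C
        (Matrix.reindex (finSumFinEquiv.trans (finCongr hn)) (finSumFinEquiv.trans (finCongr hn))
          (Matrix.fromBlocks A₁ 0 0 A₂))
        (Matrix.reindex (finSumFinEquiv.trans (finCongr hn)) (finSumFinEquiv.trans (finCongr hm))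
          (Matrix.fromBlocks B₁ 0 0 B₂))
        (Matrix.reindex (finSumFinEquiv.trans (finCongr hl)) (finSumFinEquiv.trans (finCongr hn))
          (Matrix.fromBlocks C₁ 0 0 C₂))

/-- A system is indecomposable if it is not decomposable. -/
def Indecomposable {m n l : ℕ}
    (A : Matrix (Fin n) (Fin n) ℂ) (B : Matrix (Fin n) (Fin m) ℂ)
    (C : Matrix (Fin l) (Fin n) ℂ) : Prop :=
  ¬ Decomposable A B C

/-- a size (1,2,1) system (J₂(λ), (b₂,b₁)ᵀ, (c₁,c₂)) with b₁ ≠ 0 and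
c₁ ≠ 0 is equivalent to (J₂(λ), (0,1)ᵀ, (1,μ)) for some μ. -/
theorem size_1_2_1_jordan_canonical (l b₁ b₂ c₁ c₂ : ℂ) (hb : b₁ ≠ 0) (hc : c₁ ≠ 0) :
    ∃ m : ℂ, SysEquiv !![l, 1; 0, l] !![b₂; b₁] !![c₁, c₂]
      !![l, 1; 0, l] !![0; 1] !![1, m] := by
  have hX : (!![b₁] : Matrix (Fin 1) (Fin 1) ℂ)⁻¹ = !![b₁⁻¹] :=
    Matrix.inv_eq_right_inv (by
      ext i j; fin_cases i; fin_cases j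
      simp [Matrix.mul_apply, Fin.sum_univ_one, mul_inv_cancel₀ hb])
  have hY : (!![(1:ℂ), -b₂/b₁; 0, 1])⁻¹ = !![(1:ℂ), b₂/b₁; 0, 1] :=
    Matrix.inv_eq_right_inv (by
      ext i j; fin_cases i <;> fin_cases j <;>
        simp [Matrix.mul_apply, Fin.sum_univ_two] <;> ring)
  refine ⟨b₂/b₁ + c₂/c₁, !![b₁], !![1, -b₂/b₁; 0, 1], !![c₁⁻¹], ?_, ?_, ?_, ?_, ?_, ?_⟩
  · rw [Matrix.isUnit_iff_isUnit_det]
    simpa [Matrix.det_fin_one] using hb.isUnit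
  · rw [Matrix.isUnit_iff_isUnit_det]
    simp [Matrix.det_fin_two]
  · rw [Matrix.isUnit_iff_isUnit_det]
    simpa [Matrix.det_fin_one] using (inv_ne_zero hc).isUnit
  · rw [hY]
    ext i j; fin_cases i <;> fin_cases j <;>
      simp [Matrix.mul_apply, Fin.sum_univ_two] <;> ring
  · rw [hX]
    ext i j; fin_cases i <;> fin_cases j <;>
      simp [Matrix.mul_apply, Fin.sum_univ_two, Fin.sum_univ_one] <;>
      field_simp <;> simp
  · rw [hY]
    ext i j; fin_cases i <;> fin_cases j <;>
      simp [Matrix.mul_apply, Fin.sum_univ_two, Fin.sum_univ_one] <;>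
      field_simp <;> ring
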